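/- If Eve has a winning strategy in the game G_n(A), then A belongs to the ideal J_n: A is covered by countably many closed sets each omitting a color under c_n. -/

import Mathlib

/-- The least coordinate where two elements of Cantor space differ. -/
noncomputable def Δ (x y : ℕ → Bool) : ℕ := sInf {m | x m ≠ y m}

/-- `X` omits the color `m` under `c_n`: no two distinct elements of `X` first
differ at a coordinate congruent to `m` mod `n`. -/
def omitsColor (n m : ℕ) (X : Set (ℕ → Bool)) : Prop :=
  ∀ x ∈ X, ∀ y ∈ X, x ≠ y → Δ x y % n ≠ m

/-- The limit real of an increasing sequence of Adam moves (where `|s i| ≥ i`). -/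
def limitOf (s : ℕ → List Bool) : ℕ → Bool := fun m => (s (m + 1)).getD m false

/-- Adam has a winning strategy in the game `G_n(A)`: he plays finite binary
sequences `s i` with `|s i| ≡ i (mod n)` forming an increasing chain with
`s i ⌢ b i ⊆ s (i+1)` where `b i` are Eve's bits; Adam wins if the union is in `A`. -/
def AdamWins (n : ℕ) (A : Set (ℕ → Bool)) : Prop :=
  ∃ σ : List Bool → List Bool, ∀ b : ℕ → Bool,
    (∀ i : ℕ, (σ (List.ofFn fun j : Fin i => b j)).length % n = i % n ∧
      (σ (List.ofFn fun j : Fin i => b j)) ++ [b i] <+: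
        σ (List.ofFn fun j : Fin (i + 1) => b j)) ∧
    limitOf (fun i => σ (List.ofFn fun j : Fin i => b j)) ∈ A

/-- Eve has a winning strategy in the game `G_n(A)`: her bit may depend on the
whole history `s 0, …, s i` of Adam's moves; she wins if for every legal run of
Adam against her strategy the resulting real is not in `A`. -/
def EveWins (n : ℕ) (A : Set (ℕ → Bool)) : Prop :=
  ∃ τ : List (List Bool) → Bool, ∀ s : ℕ → List Bool,
    (∀ i : ℕ, (s i).length % n = i % n ∧
      s i ++ [τ (List.ofFn fun j : Fin (i + 1) => s j)] <+: s (i + 1)) →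
    limitOf s ∉ A

namespace Stmt15Aux

open scoped Classical

/-- The restriction `x ↾ L` as a list. -/
def seg (x : ℕ → Bool) (L : ℕ) : List Bool := List.ofFn fun j : Fin L => x j

@[simp] lemma seg_length (x : ℕ → Bool) (L : ℕ) : (seg x L).length = L := by
  simp [seg]

lemma ofFn_snoc {α : Type*} (g : ℕ → α) (i : ℕ) :
    (List.ofFn fun j : Fin (i + 1) => g j) = (List.ofFn fun j : Fin i => g j) ++ [g i] := by
  rw [List.ofFn_succ']
  simp [List.concat_eq_append]

lemma seg_succ (x : ℕ → Bool) (L : ℕ) : seg x (L + 1) = seg x L ++ [x L] :=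
  ofFn_snoc x L

lemma seg_prefix (x : ℕ → Bool) {a b : ℕ} (h : a ≤ b) : seg x a <+: seg x b := by
  induction b, h using Nat.le_induction with
  | base => exact List.prefix_refl _
  | succ b hb ih =>
      refine ih.trans ?_
      rw [seg_succ]
      exact List.prefix_append _ _

lemma seg_eq_of_agree {x y : ℕ → Bool} {L : ℕ} (h : ∀ k < L, x k = y k) :
    seg x L = seg y L := by
  unfold seg
  exact congrArg _ (funext fun j => h j j.2)

lemma Δ_ne {x y : ℕ → Bool} (h : x ≠ y) : x (Δ x y) ≠ y (Δ x y) := by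
  have hne : {m | x m ≠ y m}.Nonempty := by
    rcases Function.ne_iff.mp h with ⟨m, hm⟩
    exact ⟨m, hm⟩
  exact Nat.sInf_mem hne

lemma Δ_min {x y : ℕ → Bool} {k : ℕ} (h : k < Δ x y) : x k = y k := by
  have := Nat.notMem_of_lt_sInf h
  simpa using this

/-- Lower bound for the length of Adam's next move after history `p`. -/
def lb (p : List (List Bool)) : ℕ := (p.getLast?).elim 0 (fun t => t.length + 1)

/-- The set of reals totally stuck at history `p` against Eve's strategy `τ`. -/
def G (n : ℕ) (τ : List (List Bool) → Bool) (p : List (List Bool)) : Set (ℕ → Bool) :=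
  { x | (∀ t ∈ p, t = seg x t.length) ∧
        (∀ t, p.getLast? = some t → x t.length = τ p) ∧
        (∀ L, L % n = p.length % n → lb p ≤ L → x L = !τ (p ++ [seg x L])) }

lemma isClosed_cylP (L : ℕ) (Q : (Fin L → Bool) → Prop) :
    IsClosed {x : ℕ → Bool | Q fun j => x j} := by
  have heq : {x : ℕ → Bool | Q fun j => x j}
      = ⋃ v ∈ {v : Fin L → Bool | Q v}, ⋂ j : Fin L, {x : ℕ → Bool | x j = v j} := by
    ext x
    simp only [Set.mem_setOf_eq, Set.mem_iUnion, Set.mem_iInter]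
    constructor
    · intro h; exact ⟨fun j => x j, h, fun j => rfl⟩
    · rintro ⟨v, hv, he⟩
      have : (fun j : Fin L => x j) = v := funext he
      rwa [this]
  rw [heq]
  exact Set.Finite.isClosed_biUnion (Set.toFinite _)
    fun v _ => isClosed_iInter fun j => isClosed_eq (continuous_apply _) continuous_const

lemma isClosed_G (n : ℕ) (τ : List (List Bool) → Bool) (p : List (List Bool)) :
    IsClosed (G n τ p) := by
  have h1 : IsClosed {x : ℕ → Bool | ∀ t ∈ p, t = seg x t.length} := by
    have heq : {x : ℕ → Bool | ∀ t ∈ p, t = seg x t.length}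
        = ⋂ t ∈ p, {x : ℕ → Bool | t = seg x t.length} := by
      ext x; simp
    rw [heq]
    refine isClosed_biInter fun t ht => ?_
    exact isClosed_cylP t.length (fun v => t = List.ofFn v)
  have h2 : IsClosed {x : ℕ → Bool | ∀ t, p.getLast? = some t → x t.length = τ p} := by
    have heq : {x : ℕ → Bool | ∀ t, p.getLast? = some t → x t.length = τ p}
        = ⋂ t, ⋂ (_ : p.getLast? = some t), {x : ℕ → Bool | x t.length = τ p} := by
      ext x; simp
    rw [heq]
    exact isClosed_iInter fun t => isClosed_iInter fun _ =>
      isClosed_eq (continuous_apply _) continuous_const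
  have h3 : IsClosed {x : ℕ → Bool |
      ∀ L, L % n = p.length % n → lb p ≤ L → x L = !τ (p ++ [seg x L])} := by
    have heq : {x : ℕ → Bool |
        ∀ L, L % n = p.length % n → lb p ≤ L → x L = !τ (p ++ [seg x L])}
        = ⋂ L : ℕ, {x : ℕ → Bool |
            L % n = p.length % n → lb p ≤ L → x L = !τ (p ++ [seg x L])} := by
      ext x; simp
    rw [heq]
    refine isClosed_iInter fun L => ?_
    by_cases hc : L % n = p.length % n ∧ lb p ≤ L
    · have heq2 : {x : ℕ → Bool |
          L % n = p.length % n → lb p ≤ L → x L = !τ (p ++ [seg x L])}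
          = {x : ℕ → Bool | (fun v : Fin (L + 1) → Bool =>
              v (Fin.last L) = !τ (p ++ [List.ofFn fun j : Fin L => v j.castSucc]))
              fun j => x j} := by
        ext x
        simp only [Set.mem_setOf_eq, hc.1, hc.2, forall_true_left, true_implies, seg,
          Fin.val_last, Fin.coe_castSucc]
      rw [heq2]
      exact isClosed_cylP (L + 1) (fun v =>
        v (Fin.last L) = !τ (p ++ [List.ofFn fun j : Fin L => v j.castSucc]))
    · have heq2 : {x : ℕ → Bool |
          L % n = p.length % n → lb p ≤ L → x L = !τ (p ++ [seg x L])} = Set.univ := by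
        ext x
        simp only [Set.mem_setOf_eq, Set.mem_univ, iff_true]
        intro h1' h2'
        exact absurd ⟨h1', h2'⟩ hc
      rw [heq2]
      exact isClosed_univ
  have : G n τ p = {x : ℕ → Bool | ∀ t ∈ p, t = seg x t.length}
      ∩ ({x : ℕ → Bool | ∀ t, p.getLast? = some t → x t.length = τ p}
        ∩ {x : ℕ → Bool |
          ∀ L, L % n = p.length % n → lb p ≤ L → x L = !τ (p ++ [seg x L])}) := by
    ext x
    simp only [G, Set.mem_setOf_eq, Set.mem_inter_iff]
  rw [this]
  exact h1.inter (h2.inter h3)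

lemma G_omits (n : ℕ) (τ : List (List Bool) → Bool) (p : List (List Bool)) :
    omitsColor n (p.length % n) (G n τ p) := by
  intro x hx y hy hxy hcol
  obtain ⟨hx1, hx2, hx3⟩ := hx
  obtain ⟨hy1, hy2, hy3⟩ := hy
  set d := Δ x y with hd
  have hdn : x d ≠ y d := Δ_ne hxy
  have hdm : ∀ k < d, x k = y k := fun k hk => Δ_min hk
  have hlb : lb p ≤ d := by
    unfold lb
    cases hgl : p.getLast? with
    | none => exact Nat.zero_le _
    | some t =>
        simp only [Option.elim]
        by_contra hcon
        push_neg at hcon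
        have hdle : d ≤ t.length := Nat.lt_succ_iff.mp hcon
        have htmem : t ∈ p := List.mem_of_getLast? hgl
        rcases lt_or_eq_of_le hdle with hlt | heq
        · have e1 := hx1 t htmem
          have e2 := hy1 t htmem
          have : seg x t.length = seg y t.length := e1 ▸ e2
          have := List.ofFn_inj.mp this
          exact hdn (congrFun this ⟨d, hlt⟩)
        · have e1 := hx2 t hgl
          have e2 := hy2 t hgl
          rw [heq] at hdn
          exact hdn (e1.trans e2.symm)
  have hx3' := hx3 d hcol hlb
  have hy3' := hy3 d hcol hlb
  have hseg : seg x d = seg y d := seg_eq_of_agree hdm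
  rw [hseg] at hx3'
  exact hdn (hx3'.trans hy3'.symm)

/-- Greedy choice of next move length. -/
noncomputable def nextLen (n : ℕ) (τ : List (List Bool) → Bool) (x : ℕ → Bool)
    (p : List (List Bool)) : ℕ :=
  if H : ∃ L, L % n = p.length % n ∧ lb p ≤ L ∧ x L = τ (p ++ [seg x L]) then H.choose
  else 0

lemma nextLen_spec {n : ℕ} {τ : List (List Bool) → Bool} {x : ℕ → Bool}
    {p : List (List Bool)}
    (H : ∃ L, L % n = p.length % n ∧ lb p ≤ L ∧ x L = τ (p ++ [seg x L])) :
    (nextLen n τ x p) % n = p.length % n ∧ lb p ≤ nextLen n τ x p ∧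
      x (nextLen n τ x p) = τ (p ++ [seg x (nextLen n τ x p)]) := by
  rw [nextLen, dif_pos H]
  exact H.choose_spec

/-- Greedy history of Adam's moves. -/
noncomputable def hist (n : ℕ) (τ : List (List Bool) → Bool) (x : ℕ → Bool) :
    ℕ → List (List Bool)
  | 0 => []
  | i + 1 => hist n τ x i ++ [seg x (nextLen n τ x (hist n τ x i))]

lemma bool_ne_not {a b : Bool} (h : ¬a = !b) : a = b := by
  cases a <;> cases b <;> simp_all

lemma exists_run (n : ℕ) (τ : List (List Bool) → Bool) (x : ℕ → Bool)
    (hnot : ∀ p, x ∉ G n τ p) :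
    ∃ s : ℕ → List Bool,
      (∀ i : ℕ, (s i).length % n = i % n ∧
        s i ++ [τ (List.ofFn fun j : Fin (i + 1) => s j)] <+: s (i + 1)) ∧
      limitOf s = x := by
  have hlen : ∀ i, (hist n τ x i).length = i := by
    intro i
    induction i with
    | zero => rfl
    | succ i ih => simp [hist, ih]
  have hmem : ∀ i, ∀ t ∈ hist n τ x i, t = seg x t.length := by
    intro i
    induction i with
    | zero => intro t ht; cases ht
    | succ i ih =>
        intro t ht
        rw [hist] at ht
        rcases List.mem_append.mp ht with h | h
        · exact ih t h
        · have : t = seg x (nextLen n τ x (hist n τ x i)) := List.mem_singleton.mp h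
          rw [this, seg_length]
  have hE : ∀ i, ∃ L, L % n = (hist n τ x i).length % n ∧ lb (hist n τ x i) ≤ L ∧
      x L = τ (hist n τ x i ++ [seg x L]) := by
    intro i
    induction i with
    | zero =>
        have := hnot (hist n τ x 0)
        simp only [G, Set.mem_setOf_eq, not_and] at this
        have hc1 : ∀ t ∈ hist n τ x 0, t = seg x t.length := hmem 0
        have hc2 : ∀ t, (hist n τ x 0).getLast? = some t → x t.length = τ (hist n τ x 0) := by
          intro t ht
          simp [hist] at ht
        have hc3 := this hc1 hc2
        push_neg at hc3
        obtain ⟨L, hL1, hL2, hL3⟩ := hc3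
        exact ⟨L, hL1, hL2, bool_ne_not hL3⟩
    | succ i ih =>
        set p := hist n τ x i with hp
        set ℓ := nextLen n τ x p with hℓ
        have spec := nextLen_spec ih
        have hsucc : hist n τ x (i + 1) = p ++ [seg x ℓ] := rfl
        have hglast : (hist n τ x (i + 1)).getLast? = some (seg x ℓ) := by
          rw [hsucc, List.getLast?_concat]
        have := hnot (hist n τ x (i + 1))
        simp only [G, Set.mem_setOf_eq, not_and] at this
        have hc1 : ∀ t ∈ hist n τ x (i + 1), t = seg x t.length := hmem (i + 1)
        have hc2 : ∀ t, (hist n τ x (i + 1)).getLast? = some t →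
            x t.length = τ (hist n τ x (i + 1)) := by
          intro t ht
          rw [hglast] at ht
          have : t = seg x ℓ := by injection ht with h; exact h.symm
          rw [this, seg_length, hsucc]
          exact spec.2.2
        have hc3 := this hc1 hc2
        push_neg at hc3
        obtain ⟨L, hL1, hL2, hL3⟩ := hc3
        exact ⟨L, hL1, hL2, bool_ne_not hL3⟩
  -- the run
  set L : ℕ → ℕ := fun i => nextLen n τ x (hist n τ x i) with hLdef
  set s : ℕ → List Bool := fun i => seg x (L i) with hsdef
  have hofFn : ∀ i, hist n τ x i = List.ofFn (fun j : Fin i => s j) := by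
    intro i
    induction i with
    | zero => rfl
    | succ i ih =>
        have h1 : hist n τ x (i + 1) = hist n τ x i ++ [s i] := rfl
        rw [h1, ih, ofFn_snoc (fun j => s j) i]
  have hlbsucc : ∀ i, lb (hist n τ x (i + 1)) = L i + 1 := by
    intro i
    have hglast : (hist n τ x (i + 1)).getLast? = some (seg x (L i)) := by
      rw [show hist n τ x (i + 1) = hist n τ x i ++ [seg x (L i)] from rfl,
        List.getLast?_concat]
    unfold lb
    rw [hglast]
    simp
  have hLsucc : ∀ i, L i + 1 ≤ L (i + 1) := by
    intro i
    have spec := nextLen_spec (hE (i + 1))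
    have := spec.2.1
    rwa [hlbsucc i] at this
  have hLge : ∀ i, i ≤ L i := by
    intro i
    induction i with
    | zero => exact Nat.zero_le _
    | succ i ih => exact le_trans (Nat.succ_le_succ ih) (hLsucc i)
  refine ⟨s, fun i => ⟨?_, ?_⟩, ?_⟩
  · have spec := nextLen_spec (hE i)
    have h1 := spec.1
    rw [hlen i] at h1
    show (seg x (L i)).length % n = i % n
    rwa [seg_length]
  · have spec := nextLen_spec (hE i)
    have hτeq : τ (List.ofFn fun j : Fin (i + 1) => s j) = x (L i) := by
      rw [← hofFn (i + 1)]
      have : hist n τ x (i + 1) = hist n τ x i ++ [seg x (L i)] := rfl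
      rw [this]
      exact spec.2.2.symm
    rw [hτeq]
    have : s i ++ [x (L i)] = seg x (L i + 1) := (seg_succ x (L i)).symm
    rw [show s i = seg x (L i) from rfl] at this ⊢
    rw [this]
    exact seg_prefix x (hLsucc i)
  · funext m
    have hm : m < (s (m + 1)).length := by
      rw [hsdef]
      simp only [seg_length]
      exact lt_of_lt_of_le (Nat.lt_succ_self m) (hLge (m + 1))
    show (s (m + 1)).getD m false = x m
    rw [List.getD_eq_getElem _ _ hm]
    show (seg x (L (m + 1)))[m]'_ = x m
    simp [seg]

end Stmt15Aux

open Stmt15Aux in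
/-- If Eve has a winning strategy in `G_n(A)`, then `A ∈ J_n`: it is covered by
countably many closed sets each omitting a `c_n`-color. -/
theorem stmt15 (n : ℕ) (hn : 0 < n) (A : Set (ℕ → Bool)) (h : EveWins n A) :
    ∃ F : ℕ → Set (ℕ → Bool),
      (∀ i, IsClosed (F i) ∧ ∃ m < n, omitsColor n m (F i)) ∧ A ⊆ ⋃ i, F i := by
  obtain ⟨τ, hτ⟩ := h
  refine ⟨fun k => (Encodable.decode (α := List (List Bool)) k).elim ∅ (G n τ), ?_, ?_⟩
  · intro k
    show IsClosed ((Encodable.decode (α := List (List Bool)) k).elim ∅ (G n τ)) ∧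
      ∃ m < n, omitsColor n m ((Encodable.decode (α := List (List Bool)) k).elim ∅ (G n τ))
    cases (Encodable.decode (α := List (List Bool)) k) with
    | none =>
        exact ⟨isClosed_empty, 0, hn, fun x hx => hx.elim⟩
    | some p =>
        exact ⟨isClosed_G n τ p, p.length % n, Nat.mod_lt _ hn, G_omits n τ p⟩
  · intro x hx
    have hex : ∃ p, x ∈ G n τ p := by
      by_contra hno
      push_neg at hno
      obtain ⟨s, hleg, hlim⟩ := exists_run n τ x hno
      exact (hτ s hleg) (hlim ▸ hx)
    obtain ⟨p, hp⟩ := hex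
    refine Set.mem_iUnion.2 ⟨Encodable.encode p, ?_⟩
    show x ∈ (Encodable.decode (α := List (List Bool)) (Encodable.encode p)).elim ∅ (G n τ)
    rw [Encodable.encodek]
    exact hp
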